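/- arXiv:2506.14123 — 2 statements merged into one kernel-verified Lean document; each statement's English description precedes it below -/
import Mathlib

section
/- For every token sequence T = [t₁, …, tₙ] ∈ Vⁿ, T is valid if and only if the pair [tᵢ, tᵢ₊₁] is valid for every i ∈ {1, …, n−1}. -/
/-!
Formalization of a BPE tokenizer with an ordered merge list.

* `σ` is the (finite) byte alphabet, `τ` is the (finite) vocabulary of tokens.
* `base` embeds each byte as a distinct base token.
* `dec` decodes a single token to a byte string; it is extended to token
  sequences by concatenation (`decodeSeq`).
* `merges` is the ordered merge list; each merge `(l, r, n)` replaces an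
  adjacent pair `(l, r)` by the single token `n`, and satisfies
  `dec n = dec l ++ dec r`.
* `encode` turns a byte string into its base tokens and then, processing the
  merges in order, repeatedly replaces the leftmost adjacent occurrence of
  `(l, r)` by `n` until no occurrence remains, before moving to the next merge.
-/

structure BPE (σ τ : Type*) where
  base : σ → τ
  dec : τ → List σ
  merges : List (τ × τ × τ)
  base_inj : Function.Injective base
  dec_base : ∀ b, dec (base b) = [b]
  dec_merge : ∀ m ∈ merges, dec m.2.2 = dec m.1 ++ dec m.2.1

namespace BPE

variable {σ τ : Type*} [DecidableEq τ]

/-- Decode a token sequence by concatenating the decodings of its tokens. -/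
def decodeSeq (B : BPE σ τ) (T : List τ) : List σ := (T.map B.dec).flatten

/-- Replace the leftmost adjacent occurrence of `(l, r)` by `n`, if any,
also returning the starting byte position of the replaced pair. -/
def replaceLeftmost (B : BPE σ τ) (l r n : τ) : List τ → Option (ℕ × List τ)
  | [] => none
  | [_] => none
  | t :: u :: rest =>
      if t = l ∧ u = r then some (0, n :: rest)
      else (B.replaceLeftmost l r n (u :: rest)).map
        (fun p => (p.1 + (B.dec t).length, t :: p.2))

/-- Repeatedly replace the leftmost adjacent occurrence of `(l, r)` by `n`
until no occurrence remains (the fuel, taken to be the length of the list,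
suffices since every replacement shortens the list).  Also returns the list
of byte positions at which replacements were performed, in order. -/
def runMerge (B : BPE σ τ) (l r n : τ) : ℕ → List τ → List τ × List ℕ
  | 0, T => (T, [])
  | fuel + 1, T =>
    match B.replaceLeftmost l r n T with
    | none => (T, [])
    | some (p, T') =>
      let q := B.runMerge l r n fuel T'
      (q.1, p :: q.2)

/-- Process an (indexed) list of merges in order, starting from token sequence
`T`; returns the final token sequence together with the ordered list of merge
applications performed, each recorded as a pair
(index of the merge in the merge list, starting byte position). -/
def encodeRunAux (B : BPE σ τ) : List (ℕ × τ × τ × τ) → List τ → List τ × List (ℕ × ℕ)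
  | [], T => (T, [])
  | (i, l, r, n) :: ms, T =>
    let q := B.runMerge l r n T.length T
    let q' := B.encodeRunAux ms q.1
    (q'.1, q.2.map (fun p => (i, p)) ++ q'.2)

/-- The full run of the BPE encoder on a byte string `S`: the final token
sequence together with the ordered list of merge applications performed. -/
def encodeRun (B : BPE σ τ) (S : List σ) : List τ × List (ℕ × ℕ) :=
  B.encodeRunAux (B.merges.zipIdx.map (fun p => (p.2, p.1))) (S.map B.base)

/-- BPE encoding of a byte string. -/
def encode (B : BPE σ τ) (S : List σ) : List τ := (B.encodeRun S).1

/-- The ordered list of merge applications (merge index, starting byte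
position) performed during the run of `encode` on `S`. -/
def encodeApps (B : BPE σ τ) (S : List σ) : List (ℕ × ℕ) := (B.encodeRun S).2

/-- A token sequence is *valid* if it is the canonical encoding of the byte
string it decodes to. -/
def Valid (B : BPE σ τ) (T : List τ) : Prop := B.encode (B.decodeSeq T) = T

/-- The merge list is in *normal form*:
(i) each token is produced by at most one merge;
(ii) every token `t` satisfies `encode (dec t) = [t]`;
(iii) every merge occurs later in the merge list than the merges producing
each of its two input tokens. -/
def NormalForm (B : BPE σ τ) : Prop :=
  (∀ i j (hi : i < B.merges.length) (hj : j < B.merges.length),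
      (B.merges[i]'hi).2.2 = (B.merges[j]'hj).2.2 → i = j) ∧
  (∀ t : τ, B.encode (B.dec t) = [t]) ∧
  (∀ i j (hi : i < B.merges.length) (hj : j < B.merges.length),
      (B.merges[i]'hi).2.2 = (B.merges[j]'hj).1 ∨
        (B.merges[i]'hi).2.2 = (B.merges[j]'hj).2.1 → i < j)

/-- The merge application `app = (t, p)` *crosses* byte position `c` if the
token it creates (the output of merge `t`, starting at byte position `p`)
has a byte span properly containing `c`. -/
def AppCrosses (B : BPE σ τ) (app : ℕ × ℕ) (c : ℕ) : Prop :=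
  ∃ h : app.1 < B.merges.length,
    app.2 < c ∧ c < app.2 + (B.dec (B.merges[app.1]'h).2.2).length

/-- Some merge applied during the run of `encode` on `S` crosses position `c`. -/
def MergeCrossesInRun (B : BPE σ τ) (S : List σ) (c : ℕ) : Prop :=
  ∃ app ∈ B.encodeApps S, B.AppCrosses app c

/-- The token sequence `U` contains a token whose byte span properly
contains position `c`. -/
def TokenCrosses (B : BPE σ τ) (U : List τ) (c : ℕ) : Prop :=
  ∃ k, k < U.length ∧
    (B.decodeSeq (U.take k)).length < c ∧ c < (B.decodeSeq (U.take (k + 1))).length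

end BPE
namespace BPE

variable {σ τ : Type*} [DecidableEq τ]

/-- The *Valid Covering Tree* of a byte string `P`: the set of all nonempty
token sequences `T = [t₁, …, tₙ]` such that (1) `P` is a prefix of
`decode T`, (2) `decode [t₁, …, t_{n-1}]` is a prefix of `P`, and
(3) `T` is valid. -/
def VCT (B : BPE σ τ) (P : List σ) : Set (List τ) :=
  {T | T ≠ [] ∧ P <+: B.decodeSeq T ∧ B.decodeSeq T.dropLast <+: P ∧ B.Valid T}

/-- The maximal prefix of a token sequence whose total decoded length is at
most `k`, i.e. the tokens whose byte spans end at or before position `k`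
(together with their spans, which are determined by the preceding tokens). -/
def spanPrefix (B : BPE σ τ) (k : ℕ) : List τ → List τ
  | [] => []
  | t :: T =>
      if (B.dec t).length ≤ k then t :: B.spanPrefix (k - (B.dec t).length) T
      else []

/-- `L₀` is a *lookahead bound* for the tokenizer if whenever two byte strings
agree on their first `k + L₀` bytes, the tokens of their encodings whose byte
spans end at or before position `k` coincide (with identical spans). -/
def LookaheadBound (B : BPE σ τ) (L₀ : ℕ) : Prop :=
  ∀ (x x' : List σ) (k : ℕ), x.take (k + L₀) = x'.take (k + L₀) →
    B.spanPrefix k (B.encode x) = B.spanPrefix k (B.encode x')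

/-- `U'` is the minimal covering prefix of `U` with respect to `P`: the
shortest prefix of `U` whose decoding has `P` as a prefix. -/
def IsMinCover (B : BPE σ τ) (P : List σ) (U U' : List τ) : Prop :=
  U' <+: U ∧ P <+: B.decodeSeq U' ∧
    ∀ U'' : List τ, U'' <+: U → P <+: B.decodeSeq U'' → U'.length ≤ U''.length

/-- The pair `(l, r)` occurs adjacently in `T`. -/
def PairAdj (l r : τ) (T : List τ) : Prop := ∃ A C, T = A ++ l :: r :: C

/-- The merge application `a = (t, i)` (merge index `t`, starting byte
position `i` of the left token) is applicable to the token sequence `T`. -/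
def Applicable (B : BPE σ τ) (a : ℕ × ℕ) (T : List τ) : Prop :=
  ∃ h : a.1 < B.merges.length, ∃ A C : List τ,
    T = A ++ (B.merges[a.1]'h).1 :: (B.merges[a.1]'h).2.1 :: C ∧
      (B.decodeSeq A).length = a.2

/-- `T'` is obtained from `T` by performing the merge application `a = (t, i)`:
the input pair of merge `t`, occurring adjacently in `T` with the left token
starting at byte position `i`, is replaced by the output token of merge `t`. -/
def ApplyApp (B : BPE σ τ) (a : ℕ × ℕ) (T T' : List τ) : Prop :=
  ∃ h : a.1 < B.merges.length, ∃ A C : List τ,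
    T = A ++ (B.merges[a.1]'h).1 :: (B.merges[a.1]'h).2.1 :: C ∧
      (B.decodeSeq A).length = a.2 ∧
      T' = A ++ (B.merges[a.1]'h).2.2 :: C

/-- Lexicographic order on merge applications `(t, i)`. -/
def appLE (a a' : ℕ × ℕ) : Prop :=
  a.1 < a'.1 ∨ (a.1 = a'.1 ∧ a.2 ≤ a'.2)

/-- `GreedyChain B T₀ apps T` holds when the sequence of merge applications
`apps` leads from token sequence `T₀` to token sequence `T`, and each applied
application is lexicographically least among those applicable to the current
token sequence. -/
inductive GreedyChain (B : BPE σ τ) : List τ → List (ℕ × ℕ) → List τ → Prop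
  | nil (T : List τ) : GreedyChain B T [] T
  | cons {T T' Tf : List τ} {a : ℕ × ℕ} {apps : List (ℕ × ℕ)} :
      B.ApplyApp a T T' →
      (∀ a', B.Applicable a' T → appLE a a') →
      GreedyChain B T' apps Tf →
      GreedyChain B T (a :: apps) Tf

end BPE

/-! ### Auxiliary machinery for the pairwise-validity theorem -/

set_option linter.unusedSectionVars false

namespace BPE

variable {σ τ : Type*} [DecidableEq τ]

/-- Structural description of one full merge pass (leftmost-first reduction
of the pair `(l, r)` to `n`); valid when `n ∉ {l, r}`. -/
def pass (l r n : τ) : List τ → List τ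
  | [] => []
  | [t] => [t]
  | t :: u :: rest =>
      if t = l ∧ u = r then n :: pass l r n rest
      else t :: pass l r n (u :: rest)

/-- Run a list of merges (as passes) from left to right. -/
def runM (ms : List (τ × τ × τ)) (T : List τ) : List τ :=
  ms.foldl (fun T m => pass m.1 m.2.1 m.2.2 T) T

@[simp] lemma runM_nil (T : List τ) : runM ([] : List (τ × τ × τ)) T = T := rfl

@[simp] lemma runM_cons (m : τ × τ × τ) (ms : List (τ × τ × τ)) (T : List τ) :
    runM (m :: ms) T = runM ms (pass m.1 m.2.1 m.2.2 T) := rfl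

lemma runM_append (p q : List (τ × τ × τ)) (T : List τ) :
    runM (p ++ q) T = runM q (runM p T) := by
  induction p generalizing T with
  | nil => rfl
  | cons m p ih => simp [ih]

variable (B : BPE σ τ)

@[simp] lemma decodeSeq_nil : B.decodeSeq ([] : List τ) = [] := rfl

@[simp] lemma decodeSeq_cons (t : τ) (T : List τ) :
    B.decodeSeq (t :: T) = B.dec t ++ B.decodeSeq T := by
  simp [decodeSeq]

@[simp] lemma decodeSeq_append (X Y : List τ) :
    B.decodeSeq (X ++ Y) = B.decodeSeq X ++ B.decodeSeq Y := by
  simp [decodeSeq]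

/-- A merge is *good* if decoding is compatible and both sides decode to
nonempty byte strings. -/
def GoodM (m : τ × τ × τ) : Prop :=
  B.dec m.2.2 = B.dec m.1 ++ B.dec m.2.1 ∧ B.dec m.1 ≠ [] ∧ B.dec m.2.1 ≠ []

lemma GoodM.ne_l {B : BPE σ τ} {m : τ × τ × τ} (h : B.GoodM m) : m.2.2 ≠ m.1 := by
  intro e
  have := h.1
  rw [e] at this
  have : (B.dec m.1).length = (B.dec m.1).length + (B.dec m.2.1).length := by
    simpa using congrArg List.length this
  have : (B.dec m.2.1).length = 0 := by omega
  exact h.2.2 (List.length_eq_zero_iff.mp this)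

lemma GoodM.ne_r {B : BPE σ τ} {m : τ × τ × τ} (h : B.GoodM m) : m.2.2 ≠ m.2.1 := by
  intro e
  have := h.1
  rw [e] at this
  have : (B.dec m.2.1).length = (B.dec m.1).length + (B.dec m.2.1).length := by
    simpa using congrArg List.length this
  have : (B.dec m.1).length = 0 := by omega
  exact h.2.1 (List.length_eq_zero_iff.mp this)

@[simp] lemma pass_nil (l r n : τ) : pass l r n [] = [] := rfl

@[simp] lemma pass_single (l r n t : τ) : pass l r n [t] = [t] := rfl

lemma pass_cons₂ (l r n t u : τ) (rest : List τ) :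
    pass l r n (t :: u :: rest) =
      if t = l ∧ u = r then n :: pass l r n rest
      else t :: pass l r n (u :: rest) := rfl

theorem pass_ne_nil (l r n : τ) : ∀ T : List τ, T ≠ [] → pass l r n T ≠ []
  | [], h => absurd rfl h
  | [t], _ => by simp
  | t :: u :: rest, _ => by
      rw [pass_cons₂]
      split <;> simp

lemma getLast?_cons_ne (a : τ) {X : List τ} (h : X ≠ []) :
    (a :: X).getLast? = X.getLast? := by
  cases X with
  | nil => exact absurd rfl h
  | cons x xs => exact List.getLast?_cons_cons

lemma dropLast_cons_ne (a : τ) {X : List τ} (h : X ≠ []) :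
    (a :: X).dropLast = a :: X.dropLast := by
  cases X with
  | nil => exact absurd rfl h
  | cons x xs => rfl

theorem decodeSeq_pass (B : BPE σ τ) {l r n : τ} (hm : B.dec n = B.dec l ++ B.dec r) :
    ∀ T : List τ, B.decodeSeq (pass l r n T) = B.decodeSeq T
  | [] => rfl
  | [t] => rfl
  | t :: u :: rest => by
      rw [pass_cons₂]
      split
      · rename_i h
        rw [decodeSeq_cons, decodeSeq_cons, decodeSeq_cons, decodeSeq_pass B hm rest,
          hm, h.1, h.2, List.append_assoc]
      · rw [decodeSeq_cons, decodeSeq_cons, decodeSeq_pass B hm (u :: rest)]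

/-- The straddle-firing condition for the pass `(l, r) → n` at the junction
between `U` and `V`. -/
def fireCond (l r n : τ) (U V : List τ) : Prop :=
  (pass l r n U).getLast? = some l ∧ V.head? = some r

theorem pass_append {l r n : τ} (hnl : n ≠ l) (_hnr : n ≠ r) :
    ∀ U V : List τ,
      (¬ fireCond l r n U V → pass l r n (U ++ V) = pass l r n U ++ pass l r n V) ∧
      (fireCond l r n U V →
        pass l r n (U ++ V) = (pass l r n U).dropLast ++ n :: pass l r n V.tail)
  | [], V => by
      constructor
      · intro _; simp
      · intro h; exact absurd h.1 (by simp)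
  | [a], V => by
      cases V with
      | nil =>
          constructor
          · intro _; simp
          · intro h; exact absurd h.2 (by simp)
      | cons v V' =>
          have hfc : fireCond l r n [a] (v :: V') ↔ (a = l ∧ v = r) := by
            simp [fireCond]
          constructor
          · intro h
            rw [hfc] at h
            simp only [List.singleton_append, pass_cons₂, if_neg h, pass_single]
          · intro h
            rw [hfc] at h
            simp only [List.singleton_append, pass_cons₂, if_pos h]
            simp
  | a :: b :: U', V => by
      by_cases hab : a = l ∧ b = r
      · have hL : pass l r n ((a :: b :: U') ++ V) = n :: pass l r n (U' ++ V) := by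
          rw [List.cons_append, List.cons_append, pass_cons₂, if_pos hab]
        have hU : pass l r n (a :: b :: U') = n :: pass l r n U' := by
          rw [pass_cons₂, if_pos hab]
        rcases hP : pass l r n U' with _ | ⟨x, xs⟩
        · have hU'nil : U' = [] := by
            by_contra hne
            exact pass_ne_nil l r n U' hne hP
          subst hU'nil
          have hnf : ¬ fireCond l r n (a :: b :: []) V := by
            intro h
            rw [fireCond, hU] at h
            simp at h
            exact hnl h.1
          constructor
          · intro _
            rw [hL, hU]
            simp
          · intro h; exact absurd h hnf
        · have hfc : fireCond l r n (a :: b :: U') V ↔ fireCond l r n U' V := by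
            rw [fireCond, fireCond, hU, hP, getLast?_cons_ne n (by simp)]
          have IH := pass_append hnl _hnr U' V
          constructor
          · intro h
            rw [hfc] at h
            rw [hL, IH.1 h, hU]
            rfl
          · intro h
            rw [hfc] at h
            rw [hL, IH.2 h, hU, dropLast_cons_ne n (hP ▸ List.cons_ne_nil x xs)]
            rfl
      · have hL : pass l r n ((a :: b :: U') ++ V) = a :: pass l r n ((b :: U') ++ V) := by
          rw [List.cons_append, List.cons_append, pass_cons₂, if_neg hab, ← List.cons_append]
        have hU : pass l r n (a :: b :: U') = a :: pass l r n (b :: U') := by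
          rw [pass_cons₂, if_neg hab]
        have hne : pass l r n (b :: U') ≠ [] := pass_ne_nil l r n _ (by simp)
        have hfc : fireCond l r n (a :: b :: U') V ↔ fireCond l r n (b :: U') V := by
          rw [fireCond, fireCond, hU, getLast?_cons_ne a hne]
        have IH := pass_append hnl _hnr (b :: U') V
        constructor
        · intro h
          rw [hfc] at h
          rw [hL, IH.1 h, hU]
          rfl
        · intro h
          rw [hfc] at h
          rw [hL, IH.2 h, hU, dropLast_cons_ne a hne]
          rfl
  termination_by U _ => U.length

/-- Byte position `c` is a token boundary of `X`. -/
def bdry (B : BPE σ τ) (c : ℕ) (X : List τ) : Prop :=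
  ∃ P Q, X = P ++ Q ∧ (B.decodeSeq P).length = c

theorem bdry_pass (B : BPE σ τ) {l r n : τ} (hm : B.dec n = B.dec l ++ B.dec r) (c : ℕ) :
    ∀ T : List τ, B.bdry c (pass l r n T) → B.bdry c T
  | [], h => by simpa [pass] using h
  | [t], h => by simpa [pass] using h
  | t :: u :: rest, h => by
      rw [pass_cons₂] at h
      split at h
      · rename_i hab
        obtain ⟨hab1, hab2⟩ := hab
        subst hab1; subst hab2
        obtain ⟨P, Q, hPQ, hc⟩ := h
        cases P with
        | nil => exact ⟨[], t :: u :: rest, rfl, by simpa using hc⟩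
        | cons p P' =>
            rw [List.cons_append] at hPQ
            injection hPQ with h1 h2
            subst h1
            obtain ⟨P'', Q'', hPQ'', hc''⟩ :=
              bdry_pass B hm (B.decodeSeq P').length rest ⟨P', Q, h2, rfl⟩
            refine ⟨t :: u :: P'', Q'', by simp [hPQ''], ?_⟩
            rw [decodeSeq_cons, hm] at hc
            simp only [decodeSeq_cons, List.length_append] at hc ⊢
            omega
      · obtain ⟨P, Q, hPQ, hc⟩ := h
        cases P with
        | nil => exact ⟨[], t :: u :: rest, rfl, by simpa using hc⟩
        | cons p P' =>
            rw [List.cons_append] at hPQ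
            injection hPQ with h1 h2
            subst h1
            obtain ⟨P'', Q'', hPQ'', hc''⟩ :=
              bdry_pass B hm (B.decodeSeq P').length (u :: rest) ⟨P', Q, h2, rfl⟩
            refine ⟨t :: P'', Q'', by simp [hPQ''], ?_⟩
            rw [decodeSeq_cons] at hc ⊢
            simp only [List.length_append] at hc ⊢
            omega

theorem decodeSeq_runM (B : BPE σ τ) :
    ∀ ms : List (τ × τ × τ), (∀ m ∈ ms, B.GoodM m) → ∀ T : List τ,
      B.decodeSeq (runM ms T) = B.decodeSeq T
  | [], _, T => rfl
  | m :: ms, hg, T => by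
      rw [runM_cons, decodeSeq_runM B ms (fun m hm => hg m (List.mem_cons_of_mem _ hm)),
        decodeSeq_pass B (hg m (List.mem_cons_self)).1]

theorem bdry_runM (B : BPE σ τ) (c : ℕ) :
    ∀ ms : List (τ × τ × τ), (∀ m ∈ ms, B.GoodM m) → ∀ T : List τ,
      B.bdry c (runM ms T) → B.bdry c T
  | [], _, T, h => h
  | m :: ms, hg, T, h => by
      rw [runM_cons] at h
      exact bdry_pass B (hg m (List.mem_cons_self)).1 c T
        (bdry_runM B c ms (fun m hm => hg m (List.mem_cons_of_mem _ hm)) _ h)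

theorem fireCond_not_bdry (B : BPE σ τ) {l r n : τ} (hg : B.GoodM (l, r, n))
    {U V : List τ} (hf : fireCond l r n U V) :
    ¬ B.bdry (B.decodeSeq U).length (pass l r n (U ++ V)) := by
  obtain ⟨hm0, hl0, hr0⟩ := hg
  have hm : B.dec n = B.dec l ++ B.dec r := hm0
  have hl : B.dec l ≠ [] := hl0
  have hr : B.dec r ≠ [] := hr0
  have hnl : n ≠ l := GoodM.ne_l ⟨hm0, hl0, hr0⟩
  have hnr : n ≠ r := GoodM.ne_r ⟨hm0, hl0, hr0⟩
  have hPA := (pass_append hnl hnr U V).2 hf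
  have hUne : pass l r n U ≠ [] := by
    intro e
    have h1 := hf.1
    rw [e] at h1
    simp at h1
  have hgl : (pass l r n U).getLast hUne = l := by
    have h1 := List.getLast?_eq_getLast hUne
    rw [hf.1] at h1
    exact (Option.some.injEq _ _).mp h1.symm
  have hW : pass l r n U = (pass l r n U).dropLast ++ [l] := by
    conv_lhs => rw [← List.dropLast_append_getLast hUne]
    rw [hgl]
  set W := (pass l r n U).dropLast with hWdef
  have hDU : B.decodeSeq (pass l r n U) = B.decodeSeq U := decodeSeq_pass B hm U
  have hc : (B.decodeSeq W).length + (B.dec l).length = (B.decodeSeq U).length := by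
    have := congrArg (fun X => (B.decodeSeq X).length) hW
    simp only [decodeSeq_append, decodeSeq_cons, decodeSeq_nil, List.length_append,
      List.append_nil] at this
    rw [hDU] at this
    omega
  have hlpos : 0 < (B.dec l).length := List.length_pos_iff.mpr hl
  have hrpos : 0 < (B.dec r).length := List.length_pos_iff.mpr hr
  intro hb
  rw [hPA] at hb
  obtain ⟨P, Q, hPQ, hcP⟩ := hb
  rcases List.append_eq_append_iff.mp hPQ.symm with ⟨a', hWeq, _⟩ | ⟨c', hP, hQ⟩
  · have : (B.decodeSeq W).length = (B.decodeSeq P).length + (B.decodeSeq a').length := by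
      rw [hWeq]; simp [decodeSeq_append]
    omega
  · cases c' with
    | nil =>
        rw [List.append_nil] at hP
        subst hP
        omega
    | cons x c'' =>
        rw [List.cons_append] at hQ
        injection hQ with h1 _
        subst h1
        subst hP
        simp only [decodeSeq_append, decodeSeq_cons, List.length_append] at hcP
        rw [hm] at hcP
        simp only [List.length_append] at hcP
        omega

/-- If the final run of `X ++ Y` has a token boundary at the junction, then the
run splits at the junction and the straddle never fires. -/
theorem safe (B : BPE σ τ) :
    ∀ ms : List (τ × τ × τ), (∀ m ∈ ms, B.GoodM m) → ∀ X Y : List τ,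
      B.bdry (B.decodeSeq X).length (runM ms (X ++ Y)) →
      runM ms (X ++ Y) = runM ms X ++ runM ms Y ∧
        ∀ p m s, ms = p ++ m :: s →
          ¬ fireCond m.1 m.2.1 m.2.2 (runM p X) (runM p Y)
  | [], _, X, Y, _ => by
      refine ⟨rfl, ?_⟩
      intro p m s hdec
      exact absurd hdec (by simp)
  | m :: ms, hg, X, Y, hb => by
      have hgm : B.GoodM m := hg m (List.mem_cons_self)
      have hgm' : B.GoodM (m.1, m.2.1, m.2.2) := hgm
      have hgms : ∀ m' ∈ ms, B.GoodM m' := fun m' hm' => hg m' (List.mem_cons_of_mem _ hm')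
      have hnf : ¬ fireCond m.1 m.2.1 m.2.2 X Y := by
        intro hfire
        refine fireCond_not_bdry B hgm' hfire ?_
        exact bdry_runM B _ ms hgms _ (by rw [runM_cons] at hb; exact hb)
      have hsplit : pass m.1 m.2.1 m.2.2 (X ++ Y) =
          pass m.1 m.2.1 m.2.2 X ++ pass m.1 m.2.1 m.2.2 Y :=
        (pass_append (GoodM.ne_l hgm') (GoodM.ne_r hgm') X Y).1 hnf
      have hDX : (B.decodeSeq (pass m.1 m.2.1 m.2.2 X)).length = (B.decodeSeq X).length := by
        rw [decodeSeq_pass B hgm.1]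
      have hb' : B.bdry (B.decodeSeq (pass m.1 m.2.1 m.2.2 X)).length
          (runM ms (pass m.1 m.2.1 m.2.2 X ++ pass m.1 m.2.1 m.2.2 Y)) := by
        rw [hDX, ← hsplit]
        rw [runM_cons] at hb
        exact hb
      obtain ⟨ih1, ih2⟩ := safe B ms hgms (pass m.1 m.2.1 m.2.2 X) (pass m.1 m.2.1 m.2.2 Y) hb'
      constructor
      · rw [runM_cons, runM_cons, runM_cons, hsplit, ih1]
      · intro p m' s hdec
        cases p with
        | nil =>
            injection hdec with h1 h2
            subst h1
            simpa using hnf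
        | cons p0 p' =>
            rw [List.cons_append] at hdec
            injection hdec with h1 h2
            subst h1
            have := ih2 p' m' s h2
            simpa [runM_cons] using this

/-- Distribution of a single pass over a flattened family with non-firing
junctions. -/
theorem pass_flatten {l r n : τ} (hnl : n ≠ l) (hnr : n ≠ r) :
    ∀ Us : List (List τ), (∀ U ∈ Us, U ≠ []) →
      Us.Chain' (fun U V => ¬ fireCond l r n U V) →
      pass l r n Us.flatten = (Us.map (pass l r n)).flatten
  | [], _, _ => rfl
  | [U], _, _ => by simp
  | U :: V :: Us, hne, hch => by
      obtain ⟨h1, h2⟩ := List.isChain_cons_cons.mp hch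
      have hVne : V ≠ [] := hne V (by simp)
      have hfl : (V :: Us).flatten.head? = V.head? := by
        cases V with
        | nil => exact absurd rfl hVne
        | cons v V' => simp
      have hnf : ¬ fireCond l r n U (V :: Us).flatten := by
        intro h
        exact h1 ⟨h.1, by rw [← hfl]; exact h.2⟩
      have := (pass_append hnl hnr U (V :: Us).flatten).1 hnf
      rw [List.flatten_cons, this,
        pass_flatten hnl hnr (V :: Us) (fun W hW => hne W (List.mem_cons_of_mem _ hW)) h2]
      simp

/-- Distribution of a full run over a flattened family, given junction safety
at every stage. -/
theorem dist (B : BPE σ τ) :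
    ∀ ms : List (τ × τ × τ), (∀ m ∈ ms, B.GoodM m) →
      ∀ Us : List (List τ), (∀ U ∈ Us, U ≠ []) →
      Us.Chain' (fun U V => ∀ p m s, ms = p ++ m :: s →
        ¬ fireCond m.1 m.2.1 m.2.2 (runM p U) (runM p V)) →
      runM ms Us.flatten = (Us.map (runM ms)).flatten
  | [], _, Us, _, _ => by
      have h : Us.map (runM ([] : List (τ × τ × τ))) = Us :=
        List.map_id'' (fun T => rfl) Us
      rw [runM_nil, h]
  | m :: ms, hg, Us, hne, hch => by
      have hgm : B.GoodM m := hg m (List.mem_cons_self)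
      have hgm' : B.GoodM (m.1, m.2.1, m.2.2) := hgm
      have hgms : ∀ m' ∈ ms, B.GoodM m' := fun m' hm' => hg m' (List.mem_cons_of_mem _ hm')
      have hch0 : Us.Chain' (fun U V => ¬ fireCond m.1 m.2.1 m.2.2 U V) := by
        refine hch.imp ?_
        intro U V h
        simpa using h [] m ms rfl
      have h1 : pass m.1 m.2.1 m.2.2 Us.flatten =
          (Us.map (pass m.1 m.2.1 m.2.2)).flatten :=
        pass_flatten (GoodM.ne_l hgm') (GoodM.ne_r hgm') Us hne hch0
      have hne' : ∀ U ∈ Us.map (pass m.1 m.2.1 m.2.2), U ≠ [] := by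
        intro U hU
        obtain ⟨W, hW, rfl⟩ := List.mem_map.mp hU
        exact pass_ne_nil _ _ _ W (hne W hW)
      have hch' : (Us.map (pass m.1 m.2.1 m.2.2)).Chain'
          (fun U V => ∀ p m' s, ms = p ++ m' :: s →
            ¬ fireCond m'.1 m'.2.1 m'.2.2 (runM p U) (runM p V)) := by
        unfold List.Chain'
        rw [List.isChain_map]
        refine hch.imp ?_
        intro U V h p m' s hdec
        have := h (m :: p) m' s (by rw [hdec, List.cons_append])
        simpa [runM_cons] using this
      rw [runM_cons, h1, dist B ms hgms _ hne' hch', List.map_map]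
      rfl

theorem replaceLeftmost_none (B : BPE σ τ) (l r n : τ) :
    ∀ T : List τ, B.replaceLeftmost l r n T = none → pass l r n T = T
  | [], _ => rfl
  | [t], _ => rfl
  | t :: u :: rest, h => by
      rw [replaceLeftmost] at h
      split at h
      · exact absurd h (by simp)
      · rename_i hab
        rw [Option.map_eq_none_iff] at h
        rw [pass_cons₂, if_neg hab, replaceLeftmost_none B l r n (u :: rest) h]

theorem replaceLeftmost_head (B : BPE σ τ) (l r n : τ) :
    ∀ (v : τ) (rest : List τ) (p : ℕ) (T' : List τ),
      B.replaceLeftmost l r n (v :: rest) = some (p, T') →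
      T'.head? = some v ∨ T'.head? = some n := by
  intro v rest p T' h
  cases rest with
  | nil => rw [replaceLeftmost] at h; exact absurd h (by simp)
  | cons w rest' =>
      rw [replaceLeftmost] at h
      split at h
      · injection h with h'
        injection h' with _ h2
        subst h2
        right; rfl
      · rw [Option.map_eq_some_iff] at h
        obtain ⟨⟨p', T''⟩, _, h2⟩ := h
        injection h2 with _ h3
        subst h3
        left; rfl

theorem replaceLeftmost_some (B : BPE σ τ) {l r n : τ} (hnl : n ≠ l) (hnr : n ≠ r) :
    ∀ (T : List τ) (p : ℕ) (T' : List τ),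
      B.replaceLeftmost l r n T = some (p, T') →
      pass l r n T = pass l r n T' ∧ T.length = T'.length + 1
  | [], p, T', h => by rw [replaceLeftmost] at h; exact absurd h (by simp)
  | [t], p, T', h => by rw [replaceLeftmost] at h; exact absurd h (by simp)
  | t :: u :: rest, p, T', h => by
      rw [replaceLeftmost] at h
      split at h
      · rename_i hab
        injection h with h'
        injection h' with _ h2
        subst h2
        constructor
        · rw [pass_cons₂, if_pos hab]
          cases rest with
          | nil => rfl
          | cons v rest' =>
              rw [pass_cons₂, if_neg (fun hc => hnl hc.1)]
        · simp
      · rename_i hab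
        rw [Option.map_eq_some_iff] at h
        obtain ⟨⟨p', T''⟩, h1, h2⟩ := h
        injection h2 with _ h3
        subst h3
        obtain ⟨ih1, ih2⟩ := replaceLeftmost_some B hnl hnr (u :: rest) p' T'' h1
        have hT''ne : T'' ≠ [] := by
          intro e
          rcases replaceLeftmost_head B l r n u rest p' T'' h1 with h' | h' <;>
            (rw [e] at h'; simp at h')
        constructor
        · rw [pass_cons₂, if_neg hab]
          cases hT : T'' with
          | nil => exact absurd hT hT''ne
          | cons x T''' =>
              rw [pass_cons₂]
              rw [if_neg ?_]
              · rw [ih1, hT]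
              · intro hc
                rcases replaceLeftmost_head B l r n u rest p' T'' h1 with h' | h' <;>
                  (rw [hT] at h'; simp at h'; subst h')
                · exact hab ⟨hc.1, hc.2⟩
                · exact hnr hc.2
        · simp only [List.length_cons] at ih2 ⊢
          omega

theorem runMerge_fst (B : BPE σ τ) {l r n : τ} (hnl : n ≠ l) (hnr : n ≠ r) :
    ∀ (fuel : ℕ) (T : List τ), T.length ≤ fuel →
      (B.runMerge l r n fuel T).1 = pass l r n T
  | 0, T, h => by
      have : T = [] := List.length_eq_zero_iff.mp (Nat.le_zero.mp h)
      subst this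
      rfl
  | fuel + 1, T, h => by
      rw [runMerge]
      rcases hRL : B.replaceLeftmost l r n T with _ | ⟨p, T'⟩
      · exact (replaceLeftmost_none B l r n T hRL).symm
      · obtain ⟨h1, h2⟩ := replaceLeftmost_some B hnl hnr T p T' hRL
        have := runMerge_fst B hnl hnr fuel T' (by omega)
        simp only []
        rw [this, h1]

theorem encodeRunAux_fst (B : BPE σ τ) :
    ∀ ims : List (ℕ × τ × τ × τ),
      (∀ q ∈ ims, q.2.2.2 ≠ q.2.1 ∧ q.2.2.2 ≠ q.2.2.1) →
      ∀ T : List τ, (B.encodeRunAux ims T).1 = runM (ims.map Prod.snd) T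
  | [], _, T => rfl
  | (i, l, r, n) :: ims, hq, T => by
      have hne := hq (i, l, r, n) (List.mem_cons_self)
      rw [encodeRunAux]
      simp only []
      rw [runMerge_fst B hne.1 hne.2 T.length T le_rfl,
        encodeRunAux_fst B ims (fun q hq' => hq q (List.mem_cons_of_mem _ hq')) _]
      rfl

theorem encode_nil (B : BPE σ τ) : B.encode ([] : List σ) = [] := by
  rw [encode, encodeRun]
  have : ∀ ims : List (ℕ × τ × τ × τ), (B.encodeRunAux ims ([] : List τ)).1 = [] := by
    intro ims
    induction ims with
    | nil => rfl
    | cons q ims ih =>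
        obtain ⟨i, l, r, n⟩ := q
        rw [encodeRunAux]
        simp only [List.length_nil]
        rw [show B.runMerge l r n 0 [] = ([], []) from rfl]
        exact ih
  simpa using this (B.merges.zipIdx.map (fun p => (p.2, p.1)))

theorem dec_ne_nil (B : BPE σ τ) (hNF : B.NormalForm) (t : τ) : B.dec t ≠ [] := by
  intro e
  have h := hNF.2.1 t
  rw [e, encode_nil] at h
  exact (by simp at h : False)

theorem goodM_of_NF (B : BPE σ τ) (hNF : B.NormalForm) :
    ∀ m ∈ B.merges, B.GoodM m := fun m hm =>
  ⟨B.dec_merge m hm, B.dec_ne_nil hNF _, B.dec_ne_nil hNF _⟩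

theorem encode_eq_runM (B : BPE σ τ) (hNF : B.NormalForm) (S : List σ) :
    B.encode S = runM B.merges (S.map B.base) := by
  rw [encode, encodeRun]
  have hq : ∀ q ∈ (B.merges.zipIdx.map (fun p => (p.2, p.1))), q.2.2.2 ≠ q.2.1 ∧ q.2.2.2 ≠ q.2.2.1 := by
    intro q hqm
    have : q.2 ∈ B.merges := by
      have := List.mem_map_of_mem (f := Prod.snd) hqm
      rwa [List.map_map, show (Prod.snd ∘ fun p : (τ × τ × τ) × ℕ => (p.2, p.1)) = Prod.fst from rfl, List.zipIdx_map_fst] at this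
    have hg := B.goodM_of_NF hNF q.2 this
    exact ⟨GoodM.ne_l hg, GoodM.ne_r hg⟩
  rw [encodeRunAux_fst B _ hq, List.map_map, show (Prod.snd ∘ fun p : (τ × τ × τ) × ℕ => (p.2, p.1)) = Prod.fst from rfl, List.zipIdx_map_fst]

@[simp] theorem decodeSeq_map_base (B : BPE σ τ) (S : List σ) :
    B.decodeSeq (S.map B.base) = S := by
  induction S with
  | nil => rfl
  | cons s S ih => simp [decodeSeq_cons, B.dec_base, ih]

theorem prefix_eq_of_decLen (B : BPE σ τ) (hdec : ∀ t : τ, B.dec t ≠ [])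
    {L P₁ P₂ : List τ} (h1 : P₁ <+: L) (h2 : P₂ <+: L)
    (hl : (B.decodeSeq P₁).length = (B.decodeSeq P₂).length) : P₁ = P₂ := by
  have key : ∀ Q₁ Q₂ : List τ, Q₁ <+: Q₂ →
      (B.decodeSeq Q₁).length = (B.decodeSeq Q₂).length → Q₁ = Q₂ := by
    intro Q₁ Q₂ hpre hlen
    obtain ⟨D, rfl⟩ := hpre
    cases D with
    | nil => simp
    | cons d D' =>
        exfalso
        rw [decodeSeq_append, decodeSeq_cons] at hlen
        simp only [List.length_append] at hlen
        have := List.length_pos_iff.mpr (hdec d)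
        omega
  rcases List.prefix_or_prefix_of_prefix h1 h2 with h | h
  · exact key _ _ h hl
  · exact (key _ _ h hl.symm).symm

lemma flatten_map_singleton {α : Type*} (T : List α) :
    (T.map (fun t => [t])).flatten = T := by
  induction T with
  | nil => rfl
  | cons t T ih => simp [ih]

end BPE

/-- **Pairwise validity.** For every token sequence `T = [t₁, …, tₙ]`, `T` is
valid if and only if the pair `[tᵢ, tᵢ₊₁]` is valid for every
`i ∈ {1, …, n−1}`. -/
theorem BPE.valid_iff_pairwise_valid {σ τ : Type*} [DecidableEq τ]
    (B : BPE σ τ) (hNF : B.NormalForm) (T : List τ) :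
    B.Valid T ↔
      ∀ (i : ℕ) (h : i + 1 < T.length),
        B.Valid [T[i]'(Nat.lt_of_succ_lt h), T[i + 1]'h] := by
  classical
  have hg := B.goodM_of_NF hNF
  have hdec := B.dec_ne_nil hNF
  constructor
  · -- validity implies pairwise validity
    intro hV i hi
    have hV' : runM B.merges ((B.decodeSeq T).map B.base) = T := by
      rw [← encode_eq_runM B hNF]; exact hV
    set A := T.take i with hA
    set P : List τ := [T[i]'(Nat.lt_of_succ_lt hi), T[i + 1]'hi] with hPdef
    set C := T.drop (i + 2) with hC
    have hTsplit : T = A ++ (P ++ C) := by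
      conv_lhs => rw [← List.take_append_drop i T]
      rw [List.drop_eq_getElem_cons (Nat.lt_of_succ_lt hi),
        List.drop_eq_getElem_cons hi]
      rfl
    set X₁ := (B.decodeSeq A).map B.base with hX₁
    set X₂ := (B.decodeSeq P).map B.base with hX₂
    set X₃ := (B.decodeSeq C).map B.base with hX₃
    have h0 : (B.decodeSeq T).map B.base = X₁ ++ (X₂ ++ X₃) := by
      rw [hTsplit]
      simp only [decodeSeq_append, List.map_append]
      rfl
    have hb1 : B.bdry (B.decodeSeq X₁).length (runM B.merges (X₁ ++ (X₂ ++ X₃))) := by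
      rw [← h0, hV']
      exact ⟨A, P ++ C, hTsplit, by rw [hX₁, decodeSeq_map_base]⟩
    obtain ⟨hs1, -⟩ := safe B B.merges hg X₁ (X₂ ++ X₃) hb1
    have hrun : runM B.merges X₁ ++ runM B.merges (X₂ ++ X₃) = T := by
      rw [← hs1, ← h0, hV']
    have hdlen : ∀ Z : List τ,
        (B.decodeSeq (runM B.merges ((B.decodeSeq Z).map B.base))).length =
          (B.decodeSeq Z).length := by
      intro Z
      rw [decodeSeq_runM B B.merges hg, decodeSeq_map_base]
    have hAeq : runM B.merges X₁ = A := by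
      refine B.prefix_eq_of_decLen hdec (L := T) ⟨runM B.merges (X₂ ++ X₃), hrun⟩
        ⟨P ++ C, hTsplit.symm⟩ ?_
      rw [hX₁, hdlen]
    have hPC : runM B.merges (X₂ ++ X₃) = P ++ C := by
      have h' : A ++ runM B.merges (X₂ ++ X₃) = A ++ (P ++ C) := by
        rw [← hAeq, hrun, hTsplit, hAeq]
      exact List.append_cancel_left h' 
    have hb2 : B.bdry (B.decodeSeq X₂).length (runM B.merges (X₂ ++ X₃)) := by
      rw [hPC]
      exact ⟨P, C, rfl, by rw [hX₂, decodeSeq_map_base]⟩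
    obtain ⟨hs2, -⟩ := safe B B.merges hg X₂ X₃ hb2
    have hPeq : runM B.merges X₂ = P := by
      refine B.prefix_eq_of_decLen hdec (L := P ++ C)
        ⟨runM B.merges X₃, by rw [← hs2]; exact hPC⟩ ⟨C, rfl⟩ ?_
      rw [hX₂, hdlen]
    rw [Valid, encode_eq_runM B hNF]
    exact hPeq
  · -- pairwise validity implies validity
    intro hp
    rw [Valid, encode_eq_runM B hNF]
    have hflat : (B.decodeSeq T).map B.base =
        (T.map (fun t => (B.dec t).map B.base)).flatten := by
      rw [decodeSeq, List.map_flatten, List.map_map]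
      rfl
    set Us := T.map (fun t => (B.dec t).map B.base) with hUs
    have hne : ∀ U ∈ Us, U ≠ [] := by
      intro U hU
      obtain ⟨t, _, rfl⟩ := List.mem_map.mp hU
      simpa using hdec t
    have hchainV : T.Chain' (fun a b => B.Valid [a, b]) := by
      unfold List.Chain'
      rw [List.isChain_iff_getElem]
      intro i h
      have := hp i (by omega)
      simpa [List.get_eq_getElem] using this
    have hch : Us.Chain' (fun U V => ∀ p m s, B.merges = p ++ m :: s →
        ¬ fireCond m.1 m.2.1 m.2.2 (runM p U) (runM p V)) := by
      unfold List.Chain'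
      rw [hUs, List.isChain_map]
      refine hchainV.imp ?_
      intro a b hab p m s hdec'
      have hv' : runM B.merges ((B.dec a ++ B.dec b).map B.base) = [a, b] := by
        have h' := hab
        rw [Valid, encode_eq_runM B hNF] at h'
        simpa [decodeSeq_cons] using h'
      have hbd : B.bdry (B.decodeSeq ((B.dec a).map B.base)).length
          (runM B.merges ((B.dec a).map B.base ++ (B.dec b).map B.base)) := by
        rw [← List.map_append, hv']
        exact ⟨[a], [b], rfl, by simp [decodeSeq_cons, decodeSeq_map_base]⟩
      exact (safe B B.merges hg _ _ hbd).2 p m s hdec'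
    have hdist := dist B B.merges hg Us hne hch
    rw [hflat, hdist, hUs, List.map_map]
    have hmap : T.map (runM B.merges ∘ fun t => (B.dec t).map B.base) =
        T.map (fun t => [t]) := by
      refine List.map_congr_left ?_
      intro t _
      show runM B.merges ((B.dec t).map B.base) = [t]
      rw [← encode_eq_runM B hNF]
      exact hNF.2.1 t
    rw [hmap, flatten_map_singleton]
end

section
/- Let T be a token sequence over V in which no merge of index strictly less than t is applicable (i.e., for every merge m⁽ˢ⁾ = (l, r, n) with s < t, the pair (l, r) does not occur adjacently in T). If T′ is obtained from T by replacing one adjacent occurrence of the input pair of the merge m⁽ᵗ⁾ by its output token, then no merge of index strictly less than t is applicable to T′; in particular, every newly created adjacent pair in T′ involves the output token of m⁽ᵗ⁾, which by normal form can only participate in merges of index greater than t. -/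
/-- If `(l, r)` occurs adjacently in `A ++ n :: C`, then either `n = l`, or
`n = r`, or the occurrence avoids `n` so that `(l, r)` also occurs adjacently
in `A ++ x :: y :: C` for any `x y`. -/
lemma BPE.pairAdj_of_replace {τ : Type*} {l r n x y : τ} :
    ∀ (A' A C C' : List τ), A ++ n :: C = A' ++ l :: r :: C' →
      n = l ∨ n = r ∨ BPE.PairAdj l r (A ++ x :: y :: C)
  | [], A, C, C', h => by
      match A with
      | [] => simp_all
      | [a] =>
        simp only [List.cons_append, List.nil_append, List.cons.injEq] at h
        exact Or.inr (Or.inl h.2.1)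
      | a :: b :: A3 =>
        simp only [List.cons_append, List.nil_append, List.cons.injEq] at h
        exact Or.inr (Or.inr ⟨[], A3 ++ x :: y :: C, by simp [h.1, h.2.1]⟩)
  | a :: A2', A, C, C', h => by
      match A with
      | [] =>
        simp only [List.nil_append, List.cons_append, List.cons.injEq] at h
        exact Or.inr (Or.inr ⟨x :: y :: A2', C', by simp [h.2]⟩)
      | b :: A3 =>
        simp only [List.cons_append, List.cons.injEq] at h
        rcases BPE.pairAdj_of_replace (x := x) (y := y) A2' A3 C C' h.2 with h1 | h1 | ⟨A'', C'', h1⟩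
        · exact Or.inl h1
        · exact Or.inr (Or.inl h1)
        · exact Or.inr (Or.inr ⟨b :: A'', C'', by simp [h1]⟩)

/-- Let `T` be a token sequence in which no merge of index strictly less than
`t` is applicable (i.e. for every merge `m⁽ˢ⁾ = (l, r, n)` with `s < t`, the
pair `(l, r)` does not occur adjacently in `T`).  If `T'` is obtained from `T`
by replacing one adjacent occurrence of the input pair of the merge `m⁽ᵗ⁾` by
its output token, then no merge of index strictly less than `t` is applicable
to `T'`. -/
theorem BPE.no_earlier_merge_applicable_after_merge {σ τ : Type*}
    [DecidableEq τ] (B : BPE σ τ) (hNF : B.NormalForm)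
    (T : List τ) (t : ℕ) (ht : t < B.merges.length)
    (hsmall : ∀ s (hs : s < B.merges.length), s < t →
      ¬ BPE.PairAdj (B.merges[s]'hs).1 (B.merges[s]'hs).2.1 T)
    (A C : List τ)
    (hT : T = A ++ (B.merges[t]'ht).1 :: (B.merges[t]'ht).2.1 :: C) :
    ∀ s (hs : s < B.merges.length), s < t →
      ¬ BPE.PairAdj (B.merges[s]'hs).1 (B.merges[s]'hs).2.1
        (A ++ (B.merges[t]'ht).2.2 :: C) := by
  intro s hs hst hadj
  obtain ⟨A', C', hA'⟩ := hadj
  rcases BPE.pairAdj_of_replace (x := (B.merges[t]'ht).1) (y := (B.merges[t]'ht).2.1)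
      A' A C C' hA' with h1 | h1 | h1
  · exact absurd (hNF.2.2 t s ht hs (Or.inl h1)) (by omega)
  · exact absurd (hNF.2.2 t s ht hs (Or.inr h1)) (by omega)
  · exact hsmall s hs hst (hT ▸ h1)
end
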